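/- Let f : [0,∞) → [0,∞) be integrable with ∫₀^∞ f finite and positive, and suppose f has monotone (non-decreasing) hazard rate, i.e., r ↦ f(r) / ∫_r^∞ f(x) dx is non-decreasing on the set where ∫_r^∞ f > 0. Then for all r ≥ 0 with ∫_r^∞ f > 0: r·(∫_r^∞ f(x) dx)² ≥ (∫₀^r ∫_x^∞ f(y) dy dx)·(∫_r^∞ f(x) dx − r f(r)). -/

import Mathlib

open MeasureTheory Set

theorem stmt_1 (f : ℝ → ℝ) (hf_nonneg : ∀ x, 0 ≤ f x)
    (hf_int : IntegrableOn f (Set.Ioi 0))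
    (hf_pos : 0 < ∫ x in Set.Ioi (0:ℝ), f x)
    (hMHR : ∀ r s : ℝ, 0 ≤ r → r ≤ s → 0 < ∫ x in Set.Ioi s, f x →
      f r / (∫ x in Set.Ioi r, f x) ≤ f s / (∫ x in Set.Ioi s, f x)) :
    ∀ r : ℝ, 0 ≤ r → 0 < ∫ x in Set.Ioi r, f x →
      (∫ x in Set.Ioc (0:ℝ) r, ∫ y in Set.Ioi x, f y) * ((∫ x in Set.Ioi r, f x) - r * f r)
        ≤ r * (∫ x in Set.Ioi r, f x) ^ 2 := by
  intro r hr hFr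
  set F : ℝ → ℝ := fun x => ∫ t in Set.Ioi x, f t with hF
  have hint : ∀ x : ℝ, 0 ≤ x → IntegrableOn f (Set.Ioi x) :=
    fun x hx => hf_int.mono_set (Set.Ioi_subset_Ioi hx)
  -- splitting lemma
  have hsplit : ∀ x y : ℝ, 0 ≤ x → x ≤ y → F x = (∫ t in Set.Ioc x y, f t) + F y := by
    intro x y hx hxy
    have : Set.Ioi x = Set.Ioc x y ∪ Set.Ioi y := (Set.Ioc_union_Ioi_eq_Ioi hxy).symm
    simp only [hF]
    rw [this, MeasureTheory.setIntegral_union (Set.Ioc_disjoint_Ioi le_rfl)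
      measurableSet_Ioi ((hint x hx).mono_set Set.Ioc_subset_Ioi_self)
      (hint y (hx.trans hxy))]
  -- F is antitone on [0, r]
  have hanti : AntitoneOn F (Set.Icc 0 r) := by
    intro x hx y hy hxy
    rw [hsplit x y hx.1 hxy]
    have : 0 ≤ ∫ t in Set.Ioc x y, f t :=
      MeasureTheory.setIntegral_nonneg measurableSet_Ioc fun t _ => hf_nonneg t
    linarith
  have hFint : IntegrableOn F (Set.Icc 0 r) :=
    AntitoneOn.integrableOn_isCompact isCompact_Icc hanti
  have hFint' : IntegrableOn F (Set.Ioc 0 r) :=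
    hFint.mono_set Set.Ioc_subset_Icc_self
  set G : ℝ := ∫ x in Set.Ioc (0:ℝ) r, F x with hG
  set I : ℝ := ∫ x in Set.Ioc (0:ℝ) r, f x with hI
  have hG_nonneg : 0 ≤ G := by
    refine MeasureTheory.setIntegral_nonneg measurableSet_Ioc fun x hx => ?_
    exact MeasureTheory.setIntegral_nonneg measurableSet_Ioi fun t _ => hf_nonneg t
  -- pointwise hazard inequality on Ioc 0 r
  have hpt : ∀ x ∈ Set.Ioc (0:ℝ) r, f x * F r ≤ f r * F x := by
    intro x hx
    have hx0 : (0:ℝ) ≤ x := hx.1.le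
    have hFx : F r ≤ F x := hanti ⟨hx0, hx.2⟩ ⟨hr, le_rfl⟩ hx.2
    have hFxpos : 0 < F x := lt_of_lt_of_le hFr hFx
    have h := hMHR x r hx0 hx.2 hFr
    rw [div_le_div_iff₀ hFxpos hFr] at h
    linarith
  -- Step A : I * F r ≤ f r * G
  have hA : I * F r ≤ f r * G := by
    have h1 : (∫ x in Set.Ioc (0:ℝ) r, f x * F r)
        ≤ ∫ x in Set.Ioc (0:ℝ) r, f r * F x := by
      refine MeasureTheory.setIntegral_mono_on
        ((hf_int.mono_set Set.Ioc_subset_Ioi_self).mul_const _)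
        (hFint'.const_mul _) measurableSet_Ioc hpt
    rwa [MeasureTheory.integral_mul_const, MeasureTheory.integral_const_mul] at h1
  -- Step B : G ≤ r * F 0
  have hB : G ≤ r * F 0 := by
    have h1 : (∫ x in Set.Ioc (0:ℝ) r, F x) ≤ ∫ _x in Set.Ioc (0:ℝ) r, F 0 := by
      refine MeasureTheory.setIntegral_mono_on hFint'
        (MeasureTheory.integrableOn_const (lt_top_iff_ne_top.1 ?_)) measurableSet_Ioc ?_
      · rw [Real.volume_Ioc]; exact ENNReal.ofReal_lt_top
      · intro x hx
        exact hanti ⟨le_rfl, hr⟩ ⟨hx.1.le, hx.2⟩ hx.1.le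
    rw [MeasureTheory.setIntegral_const, Real.volume_real_Ioc_of_le (by linarith), smul_eq_mul] at h1
    simpa using h1
  have hF0 : F 0 = I + F r := hsplit 0 r le_rfl hr
  -- key inequality
  have hfr := hf_nonneg r
  have hkey : G * F r ≤ r * (F r) ^ 2 + r * f r * G := by
    have h1 : G ≤ r * I + r * F r := by rw [hF0] at hB; linarith
    nlinarith [mul_le_mul_of_nonneg_left hA hr, hFr.le]
  nlinarith [mul_nonneg hFr.le (sub_nonneg.2 hkey), hFr]
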